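/- Under the spherical gradient flow with simple smallest eigenvalue λ₁ < λ₂ and h₁(0) ≠ 0, for every ε ∈ (0,1), if |h₁(t)| ≥ ε then t ≥ (1/(4(λ_k - λ₁))) log((h₂(0)² + ⋯ + h_k(0)²)/(h₁(0)²(ε^{-2}-1))) for any k with λ_k > λ₁, and if |h₁(t)| ≤ ε then t ≤ (1/(4(λ₂-λ₁))) log((h₁(0)^{-2}-1)/(ε^{-2}-1)). -/

import Mathlib

open Real

set_option maxHeartbeats 2000000 in
theorem hitting_time_bounds {N : ℕ} (hN : 2 ≤ N)
    (lam : Fin N → ℝ) (hlam : Monotone lam)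
    (hgap : lam ⟨0, by omega⟩ < lam ⟨1, by omega⟩)
    (h : Fin N → ℝ → ℝ)
    (hform : ∀ t : ℝ, 0 ≤ t →
      |h ⟨0, by omega⟩ t| = |h ⟨0, by omega⟩ 0| /
        Real.sqrt ((h ⟨0, by omega⟩ 0) ^ 2 +
          ∑ i ∈ Finset.Ioi (⟨0, by omega⟩ : Fin N),
            (h i 0) ^ 2 * Real.exp (-4 * (lam i - lam ⟨0, by omega⟩) * t)))
    (hh0 : h ⟨0, by omega⟩ 0 ≠ 0)
    (ε : ℝ) (hε : ε ∈ Set.Ioo (0:ℝ) 1)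
    (t : ℝ) (ht : 0 ≤ t) :
    (∀ k : Fin N, lam ⟨0, by omega⟩ < lam k → ε ≤ |h ⟨0, by omega⟩ t| →
      (1 / (4 * (lam k - lam ⟨0, by omega⟩))) *
          Real.log ((∑ i ∈ Finset.Icc (⟨1, by omega⟩ : Fin N) k, (h i 0) ^ 2) /
            ((h ⟨0, by omega⟩ 0) ^ 2 * ((ε ^ 2)⁻¹ - 1))) ≤ t) ∧
    (|h ⟨0, by omega⟩ t| ≤ ε →
      t ≤ (1 / (4 * (lam ⟨1, by omega⟩ - lam ⟨0, by omega⟩))) *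
        Real.log ((((h ⟨0, by omega⟩ 0) ^ 2)⁻¹ - 1) / ((ε ^ 2)⁻¹ - 1))) := by
  obtain ⟨hε0, hε1⟩ := hε
  set z0 : Fin N := ⟨0, by omega⟩ with hz0
  set z1 : Fin N := ⟨1, by omega⟩ with hz1
  set z : ℝ := h z0 0 with hzdef
  have hz2 : 0 < z ^ 2 := by positivity
  have hε2 : 0 < ε ^ 2 := by positivity
  have hεinv : 1 < (ε ^ 2)⁻¹ := (one_lt_inv₀ hε2).mpr (by nlinarith)
  have hC : 0 < z ^ 2 * ((ε ^ 2)⁻¹ - 1) := by nlinarith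
  set S : ℝ → ℝ := fun s => ∑ i ∈ Finset.Ioi z0,
      (h i 0) ^ 2 * Real.exp (-4 * (lam i - lam z0) * s) with hSdef
  have hSnn : ∀ s, 0 ≤ S s := fun s => Finset.sum_nonneg fun i _ => by positivity
  have hD : ∀ s, 0 < z ^ 2 + S s := fun s => by have := hSnn s; linarith
  -- normalization from t = 0
  have hnorm : z ^ 2 + S 0 = 1 := by
    have h0 := hform 0 le_rfl
    have hSeq : S 0 = ∑ i ∈ Finset.Ioi z0, (h i 0) ^ 2 *
        Real.exp (-4 * (lam i - lam z0) * 0) := rfl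
    rw [← hSeq] at h0
    have hzabs : (0:ℝ) < |z| := abs_pos.mpr hh0
    have hsq : Real.sqrt (z ^ 2 + S 0) = 1 := by
      have hs : 0 < Real.sqrt (z ^ 2 + S 0) := Real.sqrt_pos.mpr (hD 0)
      have h0' : |z| * Real.sqrt (z ^ 2 + S 0) = |z| :=
        (eq_div_iff (ne_of_gt hs)).mp h0
      have habs : |z| ≠ 0 := abs_ne_zero.mpr hh0
      have := mul_left_cancel₀ habs (by rw [mul_one]; exact h0' : |z| * Real.sqrt (z ^ 2 + S 0) = |z| * 1)
      exact this
    have := Real.sqrt_eq_one.mp hsq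
    linarith [this]
  have hS0 : S 0 = 1 - z ^ 2 := by linarith
  have hform' : |h z0 t| = |z| / Real.sqrt (z ^ 2 + S t) := hform t ht
  have hsqrtpos : 0 < Real.sqrt (z ^ 2 + S t) := Real.sqrt_pos.mpr (hD t)
  have hsqrtsq : Real.sqrt (z ^ 2 + S t) ^ 2 = z ^ 2 + S t :=
    Real.sq_sqrt (hD t).le
  constructor
  · -- first part
    intro k hk hεle
    have hΔ : 0 < lam k - lam z0 := by linarith
    rw [hform'] at hεle
    have h1 : ε * Real.sqrt (z ^ 2 + S t) ≤ |z| :=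
      (le_div_iff₀ hsqrtpos).mp hεle
    have h2 : ε ^ 2 * (z ^ 2 + S t) ≤ z ^ 2 := by
      have := mul_le_mul_of_nonneg_left h1 (le_of_lt (mul_pos hε0 hsqrtpos))
      calc ε ^ 2 * (z ^ 2 + S t) = (ε * Real.sqrt (z ^ 2 + S t)) ^ 2 := by
            rw [mul_pow, hsqrtsq]
        _ ≤ |z| ^ 2 := by nlinarith [abs_nonneg z, mul_nonneg hε0.le hsqrtpos.le]
        _ = z ^ 2 := sq_abs z
    have hinv : (ε ^ 2)⁻¹ * ε ^ 2 = 1 := inv_mul_cancel₀ (ne_of_gt hε2)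
    have hSt : S t ≤ z ^ 2 * ((ε ^ 2)⁻¹ - 1) := by nlinarith
    set A : ℝ := ∑ i ∈ Finset.Icc z1 k, (h i 0) ^ 2 with hAdef
    have hAnn : 0 ≤ A := Finset.sum_nonneg fun i _ => by positivity
    have hlow : A * Real.exp (-4 * (lam k - lam z0) * t) ≤ S t := by
      calc A * Real.exp (-4 * (lam k - lam z0) * t)
          = ∑ i ∈ Finset.Icc z1 k,
            (h i 0) ^ 2 * Real.exp (-4 * (lam k - lam z0) * t) := by
            rw [← Finset.sum_mul]
        _ ≤ ∑ i ∈ Finset.Icc z1 k,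
            (h i 0) ^ 2 * Real.exp (-4 * (lam i - lam z0) * t) := by
            apply Finset.sum_le_sum
            intro i hi
            have hik : i ≤ k := (Finset.mem_Icc.mp hi).2
            have : lam i ≤ lam k := hlam hik
            have : -4 * (lam k - lam z0) * t ≤ -4 * (lam i - lam z0) * t := by
              nlinarith
            exact mul_le_mul_of_nonneg_left (Real.exp_le_exp.mpr this)
              (by positivity)
        _ ≤ S t := by
            apply Finset.sum_le_sum_of_subset_of_nonneg
            · intro i hi
              have h1i : z1 ≤ i := (Finset.mem_Icc.mp hi).1
              have : z0 < z1 := by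
                rw [hz0, hz1, Fin.mk_lt_mk]; norm_num
              exact Finset.mem_Ioi.mpr (lt_of_lt_of_le this h1i)
            · intro i _ _; positivity
    rcases eq_or_lt_of_le hAnn with hA0 | hApos
    · rw [← hA0]
      simp [Real.log_zero]
      positivity
    · have hlog : Real.log (A * Real.exp (-4 * (lam k - lam z0) * t)) ≤
          Real.log (z ^ 2 * ((ε ^ 2)⁻¹ - 1)) :=
        Real.log_le_log (by positivity) (le_trans hlow hSt)
      rw [Real.log_mul (ne_of_gt hApos) (Real.exp_ne_zero _),
        Real.log_exp] at hlog
      rw [Real.log_div (ne_of_gt hApos) (ne_of_gt hC)]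
      rw [div_mul_eq_mul_div, one_mul, div_le_iff₀ (by linarith : (0:ℝ) < 4 * (lam k - lam z0))]
      nlinarith
  · -- second part
    intro hle
    have hΔ : 0 < lam z1 - lam z0 := by linarith
    rw [hform'] at hle
    have h1 : |z| ≤ ε * Real.sqrt (z ^ 2 + S t) :=
      (div_le_iff₀ hsqrtpos).mp hle
    have h2 : z ^ 2 ≤ ε ^ 2 * (z ^ 2 + S t) := by
      calc z ^ 2 = |z| ^ 2 := (sq_abs z).symm
        _ ≤ (ε * Real.sqrt (z ^ 2 + S t)) ^ 2 := by
            nlinarith [abs_nonneg z, mul_nonneg hε0.le hsqrtpos.le]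
        _ = ε ^ 2 * (z ^ 2 + S t) := by rw [mul_pow, hsqrtsq]
    have hinv : (ε ^ 2)⁻¹ * ε ^ 2 = 1 := inv_mul_cancel₀ (ne_of_gt hε2)
    have hStlow : z ^ 2 * ((ε ^ 2)⁻¹ - 1) ≤ S t := by nlinarith
    have hup : S t ≤ (1 - z ^ 2) * Real.exp (-4 * (lam z1 - lam z0) * t) := by
      rw [← hS0]
      calc S t ≤ ∑ i ∈ Finset.Ioi z0,
            (h i 0) ^ 2 * Real.exp (-4 * (lam z1 - lam z0) * t) := by
            apply Finset.sum_le_sum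
            intro i hi
            have h0i : z0 < i := Finset.mem_Ioi.mp hi
            have h1i : z1 ≤ i := by
              rw [hz1, Fin.le_def]
              rw [hz0, Fin.lt_def] at h0i
              simp only at h0i ⊢; omega
            have : lam z1 ≤ lam i := hlam h1i
            have hee : -4 * (lam i - lam z0) * t ≤ -4 * (lam z1 - lam z0) * t := by
              nlinarith
            exact mul_le_mul_of_nonneg_left (Real.exp_le_exp.mpr hee)
              (by positivity)
        _ = S 0 * Real.exp (-4 * (lam z1 - lam z0) * t) := by
            rw [hSdef]
            simp only [mul_zero, Real.exp_zero, mul_one]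
            rw [← Finset.sum_mul]
    have hCle : z ^ 2 * ((ε ^ 2)⁻¹ - 1) ≤
        (1 - z ^ 2) * Real.exp (-4 * (lam z1 - lam z0) * t) :=
      le_trans hStlow hup
    have h1z : 0 < 1 - z ^ 2 := by
      by_contra hcon
      push_neg at hcon
      nlinarith [Real.exp_pos (-4 * (lam z1 - lam z0) * t)]
    have hlog : Real.log (z ^ 2 * ((ε ^ 2)⁻¹ - 1)) ≤
        Real.log ((1 - z ^ 2) * Real.exp (-4 * (lam z1 - lam z0) * t)) :=
      Real.log_le_log hC hCle
    rw [Real.log_mul (ne_of_gt h1z) (Real.exp_ne_zero _), Real.log_exp] at hlog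
    have hargeq : ((z ^ 2)⁻¹ - 1) / ((ε ^ 2)⁻¹ - 1) =
        (1 - z ^ 2) / (z ^ 2 * ((ε ^ 2)⁻¹ - 1)) := by
      field_simp
    rw [hargeq, Real.log_div (ne_of_gt h1z) (ne_of_gt hC)]
    rw [div_mul_eq_mul_div, one_mul, le_div_iff₀ (by linarith : (0:ℝ) < 4 * (lam z1 - lam z0))]
    nlinarith
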